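/- Let A, B, B' be Banach spaces over a nontrivially normed complete field (e.g., ℝ), let s : A →L B be a continuous linear map admitting a continuous linear right inverse (t : B →L A with s ∘ t = id_B), and let i : B' →L B be a continuous linear map admitting a continuous linear left inverse (j : B →L B' with j ∘ i = id_{B'}). Let E = {(a, b') ∈ A × B' | s a = i b'}, a closed subspace of A × B', with projections i' : E → A and s' : E → B'. Then s' admits a continuous linear right inverse, and i' admits a continuous linear left inverse. -/

import Mathlib

/-- Parallel transfer in the diptych Ban: if `s : A →L B` has a continuous
linear right inverse and `i : B' →L B` has a continuous linear left inverse, then in the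
fibered product `E = {(a,b') | s a = i b'}` the projection to `B'` has a continuous
linear right inverse and the projection to `A` has a continuous linear left inverse. -/
theorem banach_parallel_transfer
    {A B B' : Type*}
    [NormedAddCommGroup A] [NormedSpace ℝ A] [CompleteSpace A]
    [NormedAddCommGroup B] [NormedSpace ℝ B] [CompleteSpace B]
    [NormedAddCommGroup B'] [NormedSpace ℝ B'] [CompleteSpace B']
    (s : A →L[ℝ] B) (t : B →L[ℝ] A) (hst : s.comp t = ContinuousLinearMap.id ℝ B)
    (i : B' →L[ℝ] B) (j : B →L[ℝ] B') (hji : j.comp i = ContinuousLinearMap.id ℝ B') :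
    (∃ σ : B' →L[ℝ] (LinearMap.ker (((s.comp (ContinuousLinearMap.fst ℝ A B') -
        i.comp (ContinuousLinearMap.snd ℝ A B') : A × B' →L[ℝ] B) : A × B' →ₗ[ℝ] B))),
      ((ContinuousLinearMap.snd ℝ A B').comp
        (Submodule.subtypeL (LinearMap.ker (((s.comp (ContinuousLinearMap.fst ℝ A B') -
          i.comp (ContinuousLinearMap.snd ℝ A B') : A × B' →L[ℝ] B) : A × B' →ₗ[ℝ] B))))).comp σ =
        ContinuousLinearMap.id ℝ B') ∧
    (∃ j' : A →L[ℝ] (LinearMap.ker (((s.comp (ContinuousLinearMap.fst ℝ A B') -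
        i.comp (ContinuousLinearMap.snd ℝ A B') : A × B' →L[ℝ] B) : A × B' →ₗ[ℝ] B))),
      j'.comp ((ContinuousLinearMap.fst ℝ A B').comp
        (Submodule.subtypeL (LinearMap.ker (((s.comp (ContinuousLinearMap.fst ℝ A B') -
          i.comp (ContinuousLinearMap.snd ℝ A B') : A × B' →L[ℝ] B) : A × B' →ₗ[ℝ] B))))) =
        ContinuousLinearMap.id ℝ (LinearMap.ker (((s.comp (ContinuousLinearMap.fst ℝ A B') -
          i.comp (ContinuousLinearMap.snd ℝ A B') : A × B' →L[ℝ] B) : A × B' →ₗ[ℝ] B)))) := by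
  have hst' : ∀ b, s (t b) = b := fun b => ContinuousLinearMap.ext_iff.mp hst b
  have hji' : ∀ b', j (i b') = b' := fun b' => ContinuousLinearMap.ext_iff.mp hji b'
  have hmem : ∀ x : A × B',
      x ∈ LinearMap.ker (((s.comp (ContinuousLinearMap.fst ℝ A B') -
        i.comp (ContinuousLinearMap.snd ℝ A B') : A × B' →L[ℝ] B) : A × B' →ₗ[ℝ] B)) ↔ s x.1 = i x.2 := by
    intro x
    simp [LinearMap.mem_ker, sub_eq_zero]
  constructor
  · refine ⟨((t.comp i).prod (ContinuousLinearMap.id ℝ B')).codRestrict _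
      (fun b' => by rw [hmem]; simp [hst']), ?_⟩
    ext b'
    simp only [ContinuousLinearMap.coe_comp', Function.comp_apply, ContinuousLinearMap.coe_codRestrict_apply, Submodule.subtypeL_apply]
    simp
  · refine ⟨((ContinuousLinearMap.id ℝ A - t.comp s +
        t.comp (i.comp (j.comp s))).prod (j.comp s)).codRestrict _
      (fun a => by rw [hmem]; simp [hst']), ?_⟩
    ext x
    · have hx := (hmem x.1).mp x.2
      simp only [ContinuousLinearMap.coe_comp', Function.comp_apply, ContinuousLinearMap.coe_codRestrict_apply, Submodule.subtypeL_apply, ContinuousLinearMap.id_apply]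
      simp [hx, hji']
    · have hx := (hmem x.1).mp x.2
      simp only [ContinuousLinearMap.coe_comp', Function.comp_apply, ContinuousLinearMap.coe_codRestrict_apply, Submodule.subtypeL_apply, ContinuousLinearMap.id_apply]
      simp [hx, hji']
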